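/- arXiv:2409.18220 — 2 statements merged into one kernel-verified Lean document; each statement's English description precedes it below -/
import Mathlib

section
/- Let G be a finite simple graph and let H_1, …, H_k be pairwise vertex-disjoint induced subgraphs of G. Then s^+(G) ≥ Σ_{i=1}^k s^+(H_i). -/
open Matrix
set_option linter.unusedSectionVars false

section Aux
variable {n : Type*} [Fintype n] [DecidableEq n]

noncomputable def pPart {A : Matrix n n ℝ} (hA : A.IsHermitian) : Matrix n n ℝ :=
  (hA.eigenvectorUnitary : Matrix n n ℝ) * diagonal (fun i => max (hA.eigenvalues i) 0)
    * (star (hA.eigenvectorUnitary : Matrix n n ℝ))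

lemma pPart_posSemidef {A : Matrix n n ℝ} (hA : A.IsHermitian) : (pPart hA).PosSemidef := by
  have hd : (diagonal (fun i => max (hA.eigenvalues i) 0)).PosSemidef :=
    PosSemidef.diagonal (fun i => le_max_right _ _)
  have := hd.mul_mul_conjTranspose_same (hA.eigenvectorUnitary : Matrix n n ℝ)
  simpa [pPart, Matrix.star_eq_conjTranspose] using this

lemma conj_mul_conj {A : Matrix n n ℝ} (hA : A.IsHermitian) (D₁ D₂ : Matrix n n ℝ) :
    ((hA.eigenvectorUnitary : Matrix n n ℝ) * D₁ * star (hA.eigenvectorUnitary : Matrix n n ℝ))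
      * ((hA.eigenvectorUnitary : Matrix n n ℝ) * D₂ * star (hA.eigenvectorUnitary : Matrix n n ℝ))
    = (hA.eigenvectorUnitary : Matrix n n ℝ) * (D₁ * D₂)
      * star (hA.eigenvectorUnitary : Matrix n n ℝ) := by
  set U := (hA.eigenvectorUnitary : Matrix n n ℝ)
  have hsU : star U * U = 1 := Unitary.coe_star_mul_self hA.eigenvectorUnitary
  calc U * D₁ * star U * (U * D₂ * star U)
      = U * D₁ * (star U * U) * D₂ * star U := by noncomm_ring
    _ = U * (D₁ * D₂) * star U := by rw [hsU]; noncomm_ring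

lemma traceConj {A : Matrix n n ℝ} (hA : A.IsHermitian) (D : Matrix n n ℝ) :
    trace ((hA.eigenvectorUnitary : Matrix n n ℝ) * D
      * star (hA.eigenvectorUnitary : Matrix n n ℝ)) = trace D := by
  rw [trace_mul_cycle]; rw [Unitary.coe_star_mul_self, one_mul]

lemma maxsq (x : ℝ) : max x 0 * max x 0 = if 0 < x then x ^ 2 else 0 := by
  rcases le_or_gt x 0 with h | h
  · simp [max_eq_right h, not_lt.mpr h]
  · simp [max_eq_left h.le, h, sq]

lemma trace_mul_pPart {A : Matrix n n ℝ} (hA : A.IsHermitian) :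
    trace (A * pPart hA) = ∑ i, if 0 < hA.eigenvalues i then hA.eigenvalues i ^ 2 else 0 := by
  have hA' : A = (hA.eigenvectorUnitary : Matrix n n ℝ) * diagonal hA.eigenvalues
      * star (hA.eigenvectorUnitary : Matrix n n ℝ) := by simpa using hA.spectral_theorem
  have h2 := congrArg (fun X => trace (X * pPart hA)) hA'
  rw [h2, pPart, conj_mul_conj, traceConj _, diagonal_mul_diagonal, trace_diagonal]
  refine Finset.sum_congr rfl fun i _ => ?_
  rw [← maxsq]
  rcases le_or_gt (hA.eigenvalues i) 0 with h | h
  · simp [max_eq_right h]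
  · simp [max_eq_left h.le]

lemma trace_pPart_sq {A : Matrix n n ℝ} (hA : A.IsHermitian) :
    trace (pPart hA * pPart hA) = ∑ i, if 0 < hA.eigenvalues i then hA.eigenvalues i ^ 2 else 0 := by
  rw [pPart, conj_mul_conj, traceConj _, diagonal_mul_diagonal, trace_diagonal]
  exact Finset.sum_congr rfl fun i _ => maxsq _

lemma key_trace_le {A C : Matrix n n ℝ} (hA : A.IsHermitian) (hC : C.PosSemidef)
    (t : ℝ) (h1 : trace (A * C) = t) (h2 : trace (C * C) = t) :
    t ≤ ∑ i, if 0 < hA.eigenvalues i then hA.eigenvalues i ^ 2 else 0 := by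
  set S := ∑ i, if 0 < hA.eigenvalues i then hA.eigenvalues i ^ 2 else 0 with hSdef
  have hSnn : 0 ≤ S := Finset.sum_nonneg fun i _ => by positivity
  rcases le_or_gt t 0 with ht | ht
  · linarith
  set U := (hA.eigenvectorUnitary : Matrix n n ℝ) with hUdef
  have hsU : star U * U = 1 := Unitary.coe_star_mul_self hA.eigenvectorUnitary
  have hUs : U * star U = 1 := Unitary.coe_mul_star_self hA.eigenvectorUnitary
  set B := star U * C * U with hBdef
  have hB : B.PosSemidef := by
    have := hC.conjTranspose_mul_mul_same U
    simpa [hBdef, Matrix.star_eq_conjTranspose] using this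
  have hdiag : ∀ i, 0 ≤ B i i := fun i => by
    simpa [dotProduct, mulVec, Pi.single_apply] using hB.dotProduct_mulVec_nonneg (Pi.single i 1)
  have hsymm : ∀ i j, B j i = B i j := fun i j => by
    have := congrFun (congrFun hB.1 i) j
    simpa [conjTranspose_apply] using this
  have hA' : A = U * diagonal hA.eigenvalues * star U := by simpa using hA.spectral_theorem
  -- t = ∑ μ i * B i i
  have h3 : t = ∑ i, hA.eigenvalues i * B i i := by
    rw [← h1]
    have e1 := congrArg (fun X => trace (X * C)) hA'
    rw [e1, show U * diagonal hA.eigenvalues * star U * C = U * (diagonal hA.eigenvalues * star U * C) by noncomm_ring, trace_mul_comm, show diagonal hA.eigenvalues * star U * C * U = diagonal hA.eigenvalues * B by rw [hBdef]; noncomm_ring]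
    simp [Matrix.trace, Matrix.diag, diagonal_mul]
  -- t = ∑ i ∑ j, (B i j)^2
  have h4 : t = ∑ i, ∑ j, (B i j) ^ 2 := by
    rw [← h2]
    have e2 : B * B = star U * (C * C) * U := by
      rw [hBdef, show star U * C * U * (star U * C * U) = star U * C * (U * star U) * C * U by noncomm_ring, hUs]
      noncomm_ring
    have e3 : trace (C * C) = trace (B * B) := by
      rw [e2, trace_mul_cycle, show U * star U * (C * C) = C * C by rw [hUs, one_mul]]
    rw [e3]
    simp only [Matrix.trace, Matrix.diag, mul_apply]
    refine Finset.sum_congr rfl fun i _ => Finset.sum_congr rfl fun j _ => ?_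
    rw [hsymm i j, sq]
  have hBiisq : ∑ i, (B i i) ^ 2 ≤ t := by
    rw [h4]
    exact Finset.sum_le_sum fun i _ =>
      Finset.single_le_sum (f := fun j => (B i j) ^ 2) (fun j _ => sq_nonneg _)
        (Finset.mem_univ i)
  have step1 : t ≤ ∑ i, max (hA.eigenvalues i) 0 * B i i := by
    rw [h3]
    exact Finset.sum_le_sum fun i _ =>
      mul_le_mul_of_nonneg_right (le_max_left _ _) (hdiag i)
  have hS2 : ∑ i, max (hA.eigenvalues i) 0 ^ 2 = S := by
    rw [hSdef]
    exact Finset.sum_congr rfl fun i _ => by rw [sq, maxsq]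
  have cs := Finset.sum_mul_sq_le_sq_mul_sq Finset.univ
    (fun i => max (hA.eigenvalues i) 0) (fun i => B i i)
  have h5 : t ^ 2 ≤ S * t := by
    calc t ^ 2 ≤ (∑ i, max (hA.eigenvalues i) 0 * B i i) ^ 2 := by
          have h0 : (0:ℝ) ≤ t := ht.le
          exact pow_le_pow_left₀ h0 step1 2
      _ ≤ (∑ i, max (hA.eigenvalues i) 0 ^ 2) * ∑ i, (B i i) ^ 2 := cs
      _ = S * ∑ i, (B i i) ^ 2 := by rw [hS2]
      _ ≤ S * t := mul_le_mul_of_nonneg_left hBiisq hSnn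
  nlinarith

end Aux

section Emb
variable {V : Type*} [Fintype V] [DecidableEq V]

noncomputable def emb (s : Finset V) (M : Matrix (↑s : Set V) (↑s : Set V) ℝ) :
    Matrix V V ℝ := fun u v =>
  if h : u ∈ s ∧ v ∈ s then M ⟨u, Finset.mem_coe.mpr h.1⟩ ⟨v, Finset.mem_coe.mpr h.2⟩ else 0

lemma sumCollapse (s : Finset V) (F : V → ℝ) (hF : ∀ u ∉ s, F u = 0) :
    ∑ u, F u = ∑ a : (↑s : Set V), F ↑a := by
  rw [← Finset.sum_subset (Finset.subset_univ s) (fun x _ hx => hF x hx)]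
  exact Finset.sum_subtype s (fun x => Finset.mem_coe.symm) F

lemma emb_apply_mem (s : Finset V) (M : Matrix (↑s : Set V) (↑s : Set V) ℝ)
    (a b : (↑s : Set V)) : emb s M ↑a ↑b = M a b := by
  have ha : (a : V) ∈ s := Finset.mem_coe.mp a.2
  have hb : (b : V) ∈ s := Finset.mem_coe.mp b.2
  simp [emb, ha, hb]

lemma emb_left (s : Finset V) (M : Matrix (↑s : Set V) (↑s : Set V) ℝ) {u : V} (v : V)
    (hu : u ∉ s) : emb s M u v = 0 := by simp [emb, hu]

lemma emb_right (s : Finset V) (M : Matrix (↑s : Set V) (↑s : Set V) ℝ) (u : V) {v : V}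
    (hv : v ∉ s) : emb s M u v = 0 := by simp [emb, hv]

lemma emb_posSemidef (s : Finset V) {M : Matrix (↑s : Set V) (↑s : Set V) ℝ}
    (hM : M.PosSemidef) : (emb s M).PosSemidef := by
  have hsym : ∀ a b, M b a = M a b := fun a b => by
    have := congrFun (congrFun hM.1 a) b
    simpa [conjTranspose_apply] using this
  rw [posSemidef_iff_dotProduct_mulVec]
  constructor
  · ext u v
    simp only [conjTranspose_apply, star_trivial]
    by_cases hu : u ∈ s <;> by_cases hv : v ∈ s <;> simp [emb, hu, hv]
    exact hsym _ _
  · intro x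
    have key : dotProduct (star x) (emb s M *ᵥ x)
        = dotProduct (star fun a : (↑s : Set V) => x ↑a) (M *ᵥ fun a : (↑s : Set V) => x ↑a) := by
      simp only [dotProduct, mulVec, star_trivial, Pi.star_apply]
      rw [sumCollapse s _ (fun u hu => by
        rw [Finset.sum_eq_zero (fun v _ => by rw [emb_left s M v hu, zero_mul]), mul_zero])]
      refine Finset.sum_congr rfl fun a _ => ?_
      congr 1
      rw [sumCollapse s _ (fun v hv => by rw [emb_right s M _ hv, zero_mul])]
      exact Finset.sum_congr rfl fun b _ => by rw [emb_apply_mem]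
    rw [key]
    exact hM.dotProduct_mulVec_nonneg _

lemma trace_mul_emb (A : Matrix V V ℝ) (s : Finset V)
    (M : Matrix (↑s : Set V) (↑s : Set V) ℝ) :
    trace (A * emb s M) = trace (A.submatrix (Subtype.val : (↑s : Set V) → V) Subtype.val * M) := by
  simp only [Matrix.trace, Matrix.diag, mul_apply, submatrix_apply]
  rw [sumCollapse s _ (fun u hu =>
    Finset.sum_eq_zero (fun v _ => by rw [emb_right s M v hu, mul_zero]))]
  refine Finset.sum_congr rfl fun a _ => ?_
  rw [sumCollapse s _ (fun v hv => by rw [emb_left s M _ hv, mul_zero])]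
  refine Finset.sum_congr rfl fun b _ => ?_
  rw [emb_apply_mem]

lemma trace_emb_mul_emb (s : Finset V) (M N : Matrix (↑s : Set V) (↑s : Set V) ℝ) :
    trace (emb s M * emb s N) = trace (M * N) := by
  simp only [Matrix.trace, Matrix.diag, mul_apply]
  rw [sumCollapse s _ (fun u hu =>
    Finset.sum_eq_zero (fun v _ => by rw [emb_left s M v hu, zero_mul]))]
  refine Finset.sum_congr rfl fun a _ => ?_
  rw [sumCollapse s _ (fun v hv => by rw [emb_right s M _ hv, zero_mul])]
  refine Finset.sum_congr rfl fun b _ => ?_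
  rw [emb_apply_mem, emb_apply_mem]

lemma trace_emb_mul_emb_disjoint {s t : Finset V} (hst : Disjoint s t)
    (M : Matrix (↑s : Set V) (↑s : Set V) ℝ) (N : Matrix (↑t : Set V) (↑t : Set V) ℝ) :
    trace (emb s M * emb t N) = 0 := by
  simp only [Matrix.trace, Matrix.diag, mul_apply]
  refine Finset.sum_eq_zero fun u _ => Finset.sum_eq_zero fun v _ => ?_
  by_cases hv : v ∈ s
  · rw [emb_left t N u (Finset.disjoint_left.mp hst hv), mul_zero]
  · rw [emb_right s M u hv, zero_mul]

lemma adjMatrix_isHermitian' (G : SimpleGraph V)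
    [DecidableRel G.Adj] : (G.adjMatrix ℝ).IsHermitian := by
  rw [Matrix.IsHermitian, Matrix.conjTranspose_eq_transpose_of_trivial]
  exact G.isSymm_adjMatrix

lemma adj_submatrix (G : SimpleGraph V) [h1 : DecidableRel G.Adj] (s : Finset V)
    [h2 : DecidableRel (G.induce (↑s : Set V)).Adj] :
    (G.adjMatrix ℝ).submatrix (Subtype.val : (↑s : Set V) → V) Subtype.val
      = (G.induce (↑s : Set V)).adjMatrix ℝ := by
  ext a b
  simp only [SimpleGraph.adjMatrix_apply, submatrix_apply, SimpleGraph.comap_adj,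
    SimpleGraph.induce_eq_coe_induce_top]
  congr

end Emb

variable {V : Type*}

/-- The real adjacency matrix of a simple graph is Hermitian. -/
lemma adjMatrix_isHermitian [Fintype V] [DecidableEq V] (G : SimpleGraph V)
    [DecidableRel G.Adj] : (G.adjMatrix ℝ).IsHermitian := by
  rw [Matrix.IsHermitian, Matrix.conjTranspose_eq_transpose_of_trivial]
  exact G.isSymm_adjMatrix

/-- The eigenvalues of the adjacency matrix of `G`, as a function indexed by the vertices. -/
noncomputable def adjEigenvalues [Fintype V] [DecidableEq V] (G : SimpleGraph V) : V → ℝ :=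
  letI := Classical.decRel G.Adj
  (adjMatrix_isHermitian G).eigenvalues

/-- The energy of a graph: the sum of the absolute values of its eigenvalues. -/
noncomputable def graphEnergy [Fintype V] [DecidableEq V] (G : SimpleGraph V) : ℝ :=
  ∑ i, |adjEigenvalues G i|

/-- The positive square energy `s⁺(G)`: the sum of squares of the positive eigenvalues. -/
noncomputable def sPlus [Fintype V] [DecidableEq V] (G : SimpleGraph V) : ℝ :=
  ∑ i, if 0 < adjEigenvalues G i then (adjEigenvalues G i) ^ 2 else 0

/-- The negative square energy `s⁻(G)`: the sum of squares of the negative eigenvalues. -/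
noncomputable def sMinus [Fintype V] [DecidableEq V] (G : SimpleGraph V) : ℝ :=
  ∑ i, if adjEigenvalues G i < 0 then (adjEigenvalues G i) ^ 2 else 0

/-- The largest adjacency eigenvalue `λ₁(G)` (for a graph with a nonempty vertex set). -/
noncomputable def maxEig [Fintype V] [DecidableEq V] (G : SimpleGraph V) : ℝ :=
  ⨆ i, adjEigenvalues G i

/-- The smallest adjacency eigenvalue `λₙ(G)` (for a graph with a nonempty vertex set). -/
noncomputable def minEig [Fintype V] [DecidableEq V] (G : SimpleGraph V) : ℝ :=
  ⨅ i, adjEigenvalues G i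


/-- If `H₁, …, H_k` are pairwise vertex-disjoint induced subgraphs of `G`,
then `s⁺(G) ≥ ∑ᵢ s⁺(Hᵢ)`. -/
theorem sPlus_ge_sum_sPlus_induced {V : Type*} [Fintype V] [DecidableEq V]
    (G : SimpleGraph V) (k : ℕ) (f : Fin k → Finset V)
    (hdisj : ∀ i j : Fin k, i ≠ j → Disjoint (f i) (f j)) :
    sPlus G ≥ ∑ i : Fin k, sPlus (G.induce (↑(f i) : Set V)) := by
  letI : DecidableRel G.Adj := Classical.decRel G.Adj
  letI : ∀ i : Fin k, DecidableRel (G.induce (↑(f i) : Set V)).Adj :=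
    fun i => Classical.decRel _
  set A := G.adjMatrix ℝ with hAdef
  have hA : A.IsHermitian := adjMatrix_isHermitian G
  have hsG : sPlus G = ∑ i, if 0 < hA.eigenvalues i then hA.eigenvalues i ^ 2 else 0 := rfl
  set H := fun i : Fin k => G.induce (↑(f i) : Set V) with hHdef
  have hAi : ∀ i, ((H i).adjMatrix ℝ).IsHermitian := fun i => adjMatrix_isHermitian _
  have hsH : ∀ i, sPlus (H i)
      = ∑ j, if 0 < (hAi i).eigenvalues j then (hAi i).eigenvalues j ^ 2 else 0 := fun i => rfl
  set P := fun i => pPart (hAi i) with hPdef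
  set C := ∑ i : Fin k, emb (f i) (P i) with hCdef
  have hCps : C.PosSemidef := by
    rw [hCdef]
    exact Finset.sum_induction _ _ (fun a b ha hb => ha.add hb) .zero
      (fun i _ => emb_posSemidef _ (pPart_posSemidef _))
  set t := ∑ i : Fin k, sPlus (H i) with htdef
  have h1 : trace (A * C) = t := by
    rw [hCdef, Matrix.mul_sum, trace_sum]
    refine Finset.sum_congr rfl fun i _ => ?_
    rw [trace_mul_emb, adj_submatrix G (f i), hPdef, trace_mul_pPart, ← hsH i]
  have h2 : trace (C * C) = t := by
    rw [hCdef, Matrix.sum_mul, trace_sum]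
    refine Finset.sum_congr rfl fun i _ => ?_
    rw [Matrix.mul_sum, trace_sum,
      Finset.sum_eq_single i
        (fun j _ hj => trace_emb_mul_emb_disjoint (hdisj i j hj.symm) _ _)
        (fun h => absurd (Finset.mem_univ i) h),
      trace_emb_mul_emb, hPdef, trace_pPart_sq, ← hsH i]
  rw [ge_iff_le, hsG]
  exact key_trace_le hA hCps t h1 h2
end

section
/- Let G be a finite simple graph and let H be an induced subgraph of G. Then s^-(G) ≥ s^-(H). -/
open Matrix

variable {V : Type*}

section Aux


variable {n m : Type*} [Fintype n] [DecidableEq n] [Fintype m] [DecidableEq m]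

noncomputable def frob (M : Matrix n n ℝ) : ℝ := ∑ i, ∑ j, (M i j)^2

omit [DecidableEq n] in
lemma frob_eq_trace (M : Matrix n n ℝ) : frob M = trace (Mᴴ * M) := by
  simp [frob, trace, Matrix.mul_apply, Matrix.diag, sq]
  rw [Finset.sum_comm]

lemma frob_conj (U : Matrix n n ℝ) (hU : U ∈ Matrix.unitaryGroup n ℝ) (M : Matrix n n ℝ) :
    frob (star U * M * U) = frob M := by
  rw [frob_eq_trace, frob_eq_trace]
  have h2 : U * Uᴴ = 1 := by
    simpa [star_eq_conjTranspose] using Unitary.mul_star_self_of_mem hU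
  have key : (star U * M * U)ᴴ * (star U * M * U) = star U * (Mᴴ * M) * U := by
    simp only [star_eq_conjTranspose, conjTranspose_mul, conjTranspose_conjTranspose,
      Matrix.mul_assoc]
    rw [← Matrix.mul_assoc U Uᴴ, h2, Matrix.one_mul]
  rw [key, Matrix.trace_mul_cycle, ← Matrix.mul_assoc, show (U * star U : Matrix n n ℝ) = 1 by
    simpa [star_eq_conjTranspose] using h2, Matrix.one_mul]

lemma psd_diag_nonneg {Y : Matrix n n ℝ} (hY : Y.PosSemidef) (i : n) : 0 ≤ Y i i := by
  exact hY.diag_nonneg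

/-- Lower bound: distance from a Hermitian matrix to any PSD matrix is at least s⁻. -/
lemma sminus_le_frob {A : Matrix n n ℝ} (hA : A.IsHermitian) {Y : Matrix n n ℝ}
    (hY : Y.PosSemidef) :
    ∑ i, (if hA.eigenvalues i < 0 then hA.eigenvalues i ^ 2 else 0) ≤ frob (A - Y) := by
  set U : Matrix n n ℝ := (hA.eigenvectorUnitary : Matrix n n ℝ) with hUdef
  have hU : U ∈ Matrix.unitaryGroup n ℝ := hA.eigenvectorUnitary.2
  have hD : star U * A * U = diagonal hA.eigenvalues := by
    have := hA.conjStarAlgAut_star_eigenvectorUnitary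
    simpa using this
  have hfc : frob (A - Y) = frob (star U * (A - Y) * U) := (frob_conj U hU _).symm
  rw [hfc]
  have hexp : star U * (A - Y) * U = diagonal hA.eigenvalues - star U * Y * U := by
    rw [Matrix.mul_sub, Matrix.sub_mul, hD]
  rw [hexp]
  set Y' : Matrix n n ℝ := star U * Y * U with hY'def
  have hY' : Y'.PosSemidef := by
    have := hY.conjTranspose_mul_mul_same U
    simpa [hY'def, star_eq_conjTranspose] using this
  -- Frobenius norm at least the sum over diagonal entries
  have hdiag : ∑ i, ((diagonal hA.eigenvalues - Y') i i)^2 ≤ frob (diagonal hA.eigenvalues - Y') := by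
    unfold frob
    refine Finset.sum_le_sum fun i _ => ?_
    exact Finset.single_le_sum (f := fun j => ((diagonal hA.eigenvalues - Y') i j)^2)
      (fun j _ => sq_nonneg _) (Finset.mem_univ i)
  refine le_trans ?_ hdiag
  refine Finset.sum_le_sum fun i _ => ?_
  have hyi : 0 ≤ Y' i i := psd_diag_nonneg hY' i
  simp only [Matrix.sub_apply, Matrix.diagonal_apply_eq]
  split_ifs with h
  · nlinarith [hyi, h]
  · positivity

/-- The positive part of a Hermitian matrix. -/
noncomputable def matPosPart {A : Matrix n n ℝ} (hA : A.IsHermitian) : Matrix n n ℝ :=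
  (hA.eigenvectorUnitary : Matrix n n ℝ) * diagonal (fun i => max (hA.eigenvalues i) 0) *
    star (hA.eigenvectorUnitary : Matrix n n ℝ)

lemma posPart_posSemidef {A : Matrix n n ℝ} (hA : A.IsHermitian) : (matPosPart hA).PosSemidef := by
  have hd : (diagonal (fun i => max (hA.eigenvalues i) 0)).PosSemidef :=
    Matrix.PosSemidef.diagonal fun i => le_max_right _ _
  have := hd.mul_mul_conjTranspose_same (hA.eigenvectorUnitary : Matrix n n ℝ)
  simpa [matPosPart, star_eq_conjTranspose, Matrix.mul_assoc] using this

lemma frob_sub_posPart {A : Matrix n n ℝ} (hA : A.IsHermitian) :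
    frob (A - matPosPart hA) = ∑ i, (if hA.eigenvalues i < 0 then hA.eigenvalues i ^ 2 else 0) := by
  set U : Matrix n n ℝ := (hA.eigenvectorUnitary : Matrix n n ℝ) with hUdef
  have hU : U ∈ Matrix.unitaryGroup n ℝ := hA.eigenvectorUnitary.2
  have hUs : star U * U = 1 := Unitary.star_mul_self_of_mem hU
  have hA' : A = U * diagonal hA.eigenvalues * star U := by
    have := hA.spectral_theorem
    simpa using this
  have hdiff : A - matPosPart hA = U * diagonal (fun i => min (hA.eigenvalues i) 0) * star U := by
    have h1 : A - matPosPart hA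
        = U * diagonal hA.eigenvalues * star U
          - U * diagonal (fun i => max (hA.eigenvalues i) 0) * star U := by
      rw [← hA']; rfl
    have hfun : (fun i => hA.eigenvalues i - max (hA.eigenvalues i) 0)
        = fun i => min (hA.eigenvalues i) 0 := by
      funext i
      rcases le_or_gt (hA.eigenvalues i) 0 with h | h
      · rw [min_eq_left h, max_eq_right h, sub_zero]
      · rw [min_eq_right h.le, max_eq_left h.le, sub_self]
    rw [h1, ← Matrix.sub_mul, ← Matrix.mul_sub, Matrix.diagonal_sub, hfun]
  have : frob (A - matPosPart hA) = frob (diagonal (fun i => min (hA.eigenvalues i) 0)) := by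
    rw [hdiff]
    have := frob_conj U hU (U * diagonal (fun i => min (hA.eigenvalues i) 0) * star U)
    rw [← this]
    congr 1
    rw [show star U * (U * diagonal (fun i => min (hA.eigenvalues i) 0) * star U) * U
        = (star U * U) * diagonal (fun i => min (hA.eigenvalues i) 0) * (star U * U) by
      simp [Matrix.mul_assoc], hUs]
    simp
  rw [this]
  unfold frob
  rw [← Finset.sum_congr rfl fun i _ => rfl]
  refine Finset.sum_congr rfl fun i _ => ?_
  rw [Finset.sum_eq_single i]
  · rcases lt_or_ge (hA.eigenvalues i) 0 with h | h
    · simp [Matrix.diagonal_apply_eq, min_eq_left h.le, h]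
    · simp [Matrix.diagonal_apply_eq, min_eq_right h, not_lt.2 h]
  · intro j _ hj
    simp [Matrix.diagonal_apply_ne' _ hj]
  · simp

lemma sum_comp_le {f : m → n} (hf : Function.Injective f) (g : n → ℝ) (hg : ∀ j, 0 ≤ g j) :
    ∑ j : m, g (f j) ≤ ∑ j : n, g j := by
  have h : ∑ j ∈ Finset.univ.map ⟨f, hf⟩, g j = ∑ j : m, g (f j) :=
    Finset.sum_map Finset.univ ⟨f, hf⟩ g
  rw [← h]
  exact Finset.sum_le_sum_of_subset_of_nonneg (Finset.subset_univ _) (fun j _ _ => hg j)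

lemma frob_submatrix_le (M : Matrix n n ℝ) {f : m → n} (hf : Function.Injective f) :
    frob (M.submatrix f f) ≤ frob M := by
  unfold frob
  calc ∑ i : m, ∑ j : m, (M.submatrix f f i j)^2
      ≤ ∑ i : m, ∑ j : n, (M (f i) j)^2 := by
        refine Finset.sum_le_sum fun i _ => ?_
        exact sum_comp_le hf (fun j => (M (f i) j)^2) (fun j => sq_nonneg _)
    _ ≤ ∑ i : n, ∑ j : n, (M i j)^2 :=
        sum_comp_le hf (fun i => ∑ j : n, (M i j)^2)
          (fun i => Finset.sum_nonneg fun j _ => sq_nonneg _)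

lemma eig_neg_sq_submatrix_le {A : Matrix n n ℝ} {B : Matrix m m ℝ} (hA : A.IsHermitian)
    (hB : B.IsHermitian) {f : m → n} (hf : Function.Injective f)
    (hAB : B = A.submatrix f f) :
    ∑ i, (if hB.eigenvalues i < 0 then hB.eigenvalues i ^ 2 else 0)
      ≤ ∑ i, (if hA.eigenvalues i < 0 then hA.eigenvalues i ^ 2 else 0) := by
  have hPs : ((matPosPart hA).submatrix f f).PosSemidef :=
    (posPart_posSemidef hA).submatrix f
  calc ∑ i, (if hB.eigenvalues i < 0 then hB.eigenvalues i ^ 2 else 0)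
      ≤ frob (B - (matPosPart hA).submatrix f f) := sminus_le_frob hB hPs
    _ = frob ((A - matPosPart hA).submatrix f f) := by
        rw [hAB]; congr 1
    _ ≤ frob (A - matPosPart hA) := frob_submatrix_le _ hf
    _ = ∑ i, (if hA.eigenvalues i < 0 then hA.eigenvalues i ^ 2 else 0) := frob_sub_posPart hA

end Aux

/-- For an induced subgraph `H` of `G`, `s⁻(G) ≥ s⁻(H)`. -/
theorem sMinus_ge_sMinus_induced {V : Type*} [Fintype V] [DecidableEq V]
    (G : SimpleGraph V) (s : Finset V) :
    sMinus G ≥ sMinus (G.induce (↑s : Set V)) := by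
  rw [ge_iff_le]
  unfold sMinus adjEigenvalues
  letI i1 := Classical.decRel G.Adj
  letI i2 := Classical.decRel (G.induce (↑s : Set V)).Adj
  refine eig_neg_sq_submatrix_le (adjMatrix_isHermitian G)
    (adjMatrix_isHermitian (G.induce (↑s : Set V))) (f := (↑)) Subtype.coe_injective ?_
  ext i j
  simp only [SimpleGraph.adjMatrix_apply, Matrix.submatrix_apply]
  exact if_congr (by exact Iff.rfl) rfl rfl
end
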